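/- Let $v:2^U\to\mathbb{R}$ be a submodular function on a finite set $U$, and let $A_1,\dots,A_k$ and $S_1,\dots,S_k$ be subsets of $U$ with $S_i\subseteq A_i$ for each $i$, where $A_1,\dots,A_k$ are pairwise disjoint. Write $S=\bigcup_i S_i$ and for each $i$ let $L^{(t)}=\bigcup_{j\le t}A_j \cup \bigcup_{j>t}S_j$. Then $\sum_{i=1}^k v(A_i\cup\bigcup_{j\ne i}S_j) \ge v(\bigcup_{i=1}^k A_i) + (k-1)\,v(S)$. -/
import Mathlib


open Finset

theorem hybridization_bound {α : Type*} [DecidableEq α] [Fintype α]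
    (v : Finset α → ℝ)
    (hmono : ∀ X Y : Finset α, X ⊆ Y → v X ≤ v Y)
    (hsub : ∀ X Y : Finset α, v X + v Y ≥ v (X ∪ Y) + v (X ∩ Y))
    (k : ℕ) (A S : Fin k → Finset α)
    (hSA : ∀ i, S i ⊆ A i)
    (hdisj : ∀ i j, i ≠ j → Disjoint (A i) (A j)) :
    ∑ i : Fin k, v (A i ∪ (Finset.univ.erase i).biUnion S) ≥
      v (Finset.univ.biUnion A) + ((k : ℝ) - 1) * v (Finset.univ.biUnion S) := by
  classical
  set Sall := (Finset.univ.biUnion S) with hSall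
  set L : ℕ → Finset α := fun t =>
    (univ.filter (fun j : Fin k => (j : ℕ) < t)).biUnion A ∪
    (univ.filter (fun j : Fin k => t ≤ (j : ℕ))).biUnion S with hLdef
  have hL0 : L 0 = Sall := by
    simp [hLdef, hSall]
  have hLk : L k = univ.biUnion A := by
    have h1 : (univ.filter (fun j : Fin k => (j : ℕ) < k)) = univ := by
      ext j; simp [j.isLt]
    have h2 : (univ.filter (fun j : Fin k => k ≤ (j : ℕ))) = ∅ := by
      ext j; simp [Nat.not_le.mpr j.isLt]
    simp [hLdef, h1, h2]
  have key : ∀ i : Fin k,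
      v (A i ∪ (univ.erase i).biUnion S) + v (L i) ≥ v (L ((i : ℕ) + 1)) + v Sall := by
    intro i
    set X := A i ∪ (univ.erase i).biUnion S with hX
    have h1 : L ((i : ℕ) + 1) ⊆ X ∪ L i := by
      intro x hx
      simp only [hLdef, hX, mem_union, mem_biUnion, mem_filter, mem_univ, true_and,
        mem_erase] at hx ⊢
      rcases hx with ⟨j, hj, hxj⟩ | ⟨j, hj, hxj⟩
      · rcases eq_or_ne j i with rfl | hne
        · exact Or.inl (Or.inl hxj)
        · have hv : (j : ℕ) ≠ (i : ℕ) := fun h => hne (Fin.ext h)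
          exact Or.inr (Or.inl ⟨j, by omega, hxj⟩)
      · have hne : j ≠ i := by rintro rfl; omega
        exact Or.inl (Or.inr ⟨j, ⟨hne, trivial⟩, hxj⟩)
    have h2 : Sall ⊆ X ∩ L i := by
      intro x hx
      simp only [hSall, mem_biUnion, mem_univ, true_and] at hx
      obtain ⟨j, hxj⟩ := hx
      simp only [hLdef, hX, mem_inter, mem_union, mem_biUnion, mem_filter, mem_univ,
        true_and, mem_erase]
      constructor
      · rcases eq_or_ne j i with rfl | hne
        · exact Or.inl (hSA _ hxj)
        · exact Or.inr ⟨j, ⟨hne, trivial⟩, hxj⟩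
      · rcases lt_or_ge (j : ℕ) (i : ℕ) with h | h
        · exact Or.inl ⟨j, h, hSA j hxj⟩
        · exact Or.inr ⟨j, h, hxj⟩
    have := hsub X (L i)
    have m1 := hmono _ _ h1
    have m2 := hmono _ _ h2
    linarith
  -- sum the key inequality
  have hsum : ∑ i : Fin k, (v (L ((i : ℕ) + 1)) + v Sall) ≤
      ∑ i : Fin k, (v (A i ∪ (univ.erase i).biUnion S) + v (L i)) :=
    Finset.sum_le_sum (fun i _ => key i)
  have htel : ∑ i : Fin k, (v (L ((i : ℕ) + 1)) - v (L (i : ℕ))) = v (L k) - v (L 0) := by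
    rw [Fin.sum_univ_eq_sum_range (fun i => v (L (i + 1)) - v (L i))]
    exact Finset.sum_range_sub (fun t => v (L t)) k
  have hconst : ∑ _i : Fin k, v Sall = (k : ℝ) * v Sall := by
    simp [Finset.sum_const, mul_comm]
  rw [Finset.sum_add_distrib] at hsum
  rw [Finset.sum_add_distrib, hconst] at hsum
  rw [Finset.sum_sub_distrib, hL0, hLk] at htel
  linarith
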